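/- Let ε > 0, let L be a class of losses ℓ: [0,1] × {0,1} → [−1,1] each of bounded variation (L ⊆ L_BV), let G be a set of groups each with P_g > 0, and let H be a nonempty hypothesis class. If a predictor p*: X → [0,1] is (G,H,ε)-step calibrated, then p* is an (L,G,H,20ε)-panpredictor; that is, deterministic step calibration implies deterministic panprediction with error degraded only by a universal constant factor (one may take the constant 20). -/

import Mathlib

open MeasureTheory ProbabilityTheory Set

set_option linter.unusedSectionVars false
set_option linter.unusedVariables false
set_option maxHeartbeats 1000000

noncomputable section

/-- Real value of a Boolean label. -/
def lab (y : Bool) : ℝ := if y then 1 else 0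

/-- Conditional expectation of `f` under `D`, given that the group membership
function `g` evaluates to `true` on the context. -/
def condE {X : Type*} [MeasurableSpace X] (D : Measure (X × Bool)) (g : X → Bool)
    (f : X × Bool → ℝ) : ℝ :=
  ∫ z, f z ∂(D[|{z : X × Bool | g z.1 = true}])

/-- Probability of group `g` under `D`. -/
def Pg {X : Type*} [MeasurableSpace X] (D : Measure (X × Bool)) (g : X → Bool) : ℝ :=
  (D {z : X × Bool | g z.1 = true}).toReal

/-- The set of all partition sums `∑ |f(z_{j+1}) - f(z_j)|` over finite partitions
`0 = z_0 < z_1 < ⋯ < z_m = 1` of `[0,1]`.  `V(f) ≤ C` iff every element is `≤ C`. -/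
def partitionSums (f : ℝ → ℝ) : Set ℝ :=
  {S | ∃ (m : ℕ) (z : ℕ → ℝ), z 0 = 0 ∧ z m = 1 ∧ (∀ i < m, z i < z (i + 1)) ∧
      S = ∑ i ∈ Finset.range m, |f (z (i + 1)) - f (z i)|}

namespace Stmt0Aux

lemma abs_sub'' (a b : ℝ) : |a - b| ≤ |a| + |b| := by
  rw [sub_eq_add_neg]
  exact (abs_add_le _ _).trans (by rw [abs_neg])


variable {Z : Type*} [MeasurableSpace Z] {μ : Measure Z} [IsProbabilityMeasure μ]

lemma integrable_of_bdd {f : Z → ℝ} (hf : Measurable f) {C : ℝ} (hC : ∀ z, |f z| ≤ C) :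
    Integrable f μ :=
  (integrable_const C).mono' hf.aestronglyMeasurable
    (Filter.Eventually.of_forall (by simpa [Real.norm_eq_abs] using hC))

lemma strict_of_nonstrict {r W : Z → ℝ} (hr : Measurable r) (hrb : ∀ z, |r z| ≤ 1)
    (hW : Measurable W) {c : ℝ}
    (hns : ∀ v : ℝ, |∫ z, r z * (if W z ≤ v then 1 else 0) ∂μ| ≤ c) (v : ℝ) :
    |∫ z, r z * (if W z < v then 1 else 0) ∂μ| ≤ c := by
  set F : ℕ → Z → ℝ := fun n z => r z * (if W z ≤ v - 1 / (n + 1) then 1 else 0) with hF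
  have hmeasn : ∀ n, AEStronglyMeasurable (F n) μ := by
    intro n
    exact ((hr.mul (Measurable.ite (hW measurableSet_Iic) measurable_const
      measurable_const))).aestronglyMeasurable
  have hbound : ∀ n, ∀ᵐ z ∂μ, ‖F n z‖ ≤ (1 : ℝ) := by
    intro n
    refine Filter.Eventually.of_forall fun z => ?_
    rw [Real.norm_eq_abs, hF, abs_mul]
    have h1 : |(if W z ≤ v - 1 / ((n : ℝ) + 1) then (1:ℝ) else 0)| ≤ 1 := by
      split <;> simp
    calc |r z| * |(if W z ≤ v - 1 / ((n : ℝ) + 1) then (1:ℝ) else 0)| ≤ 1 * 1 :=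
          mul_le_mul (hrb z) h1 (abs_nonneg _) zero_le_one
      _ = 1 := one_mul 1
  have htendsto : ∀ z, Filter.Tendsto (fun n => F n z) Filter.atTop
      (nhds (r z * (if W z < v then 1 else 0))) := by
    intro z
    by_cases h : W z < v
    · have hseq : Filter.Tendsto (fun n : ℕ => v - 1 / ((n : ℝ) + 1)) Filter.atTop (nhds v) := by
        have := tendsto_one_div_add_atTop_nhds_zero_nat (𝕜 := ℝ)
        have h2 := Filter.Tendsto.sub (tendsto_const_nhds (x := v)) this
        simpa using h2
      have hev : ∀ᶠ (n : ℕ) in Filter.atTop, W z ≤ v - 1 / ((n : ℝ) + 1) :=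
        hseq.eventually_const_le h
      rw [if_pos h, mul_one]
      refine Filter.Tendsto.congr' ?_ (tendsto_const_nhds (x := r z))
      filter_upwards [hev] with n hn
      rw [hF]; simp only [if_pos hn, mul_one]
    · rw [if_neg h, mul_zero]
      push_neg at h
      refine Filter.Tendsto.congr' ?_ (tendsto_const_nhds (x := (0:ℝ)))
      refine Filter.Eventually.of_forall fun n => ?_
      have : ¬ W z ≤ v - 1 / ((n : ℝ) + 1) := by
        have hpos : (0:ℝ) < 1 / ((n : ℝ) + 1) := by positivity
        push_neg; linarith
      rw [hF]; simp only [if_neg this, mul_zero]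
  have hlim := tendsto_integral_of_dominated_convergence (fun _ => (1:ℝ)) hmeasn
    (integrable_const 1) hbound (Filter.Eventually.of_forall htendsto)
  have habs := hlim.abs
  exact le_of_tendsto habs (Filter.Eventually.of_forall fun n => hns _)

lemma downset_bound {r W : Z → ℝ} {c : ℝ}
    (hW0 : ∀ z, 0 ≤ W z) (hW1 : ∀ z, W z ≤ 1) (hc : 0 ≤ c)
    (hns : ∀ v : ℝ, |∫ z, r z * (if W z ≤ v then 1 else 0) ∂μ| ≤ c)
    (hst : ∀ v : ℝ, |∫ z, r z * (if W z < v then 1 else 0) ∂μ| ≤ c)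
    (S : Set ℝ) (hS : ∀ a b : ℝ, a ≤ b → b ∈ S → a ∈ S) [DecidablePred (· ∈ S)] :
    |∫ z, r z * (if W z ∈ S then 1 else 0) ∂μ| ≤ c := by
  by_cases hSne : S.Nonempty
  · by_cases hU : Sᶜ.Nonempty
    · obtain ⟨u, hu⟩ := hU
      have hbdd : BddAbove S := by
        refine ⟨u, fun s hs => ?_⟩
        by_contra hlt
        push_neg at hlt
        exact hu (hS u s hlt.le hs)
      set w := sSup S with hw
      by_cases hwS : w ∈ S
      · have heq : (fun z => r z * (if W z ∈ S then 1 else 0)) =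
            fun z => r z * (if W z ≤ w then 1 else 0) := by
          funext z
          by_cases h : W z ∈ S
          · rw [if_pos h, if_pos (le_csSup hbdd h)]
          · rw [if_neg h, if_neg]
            intro hle
            exact h (hS _ _ hle hwS)
        rw [heq]; exact hns w
      · have heq : (fun z => r z * (if W z ∈ S then 1 else 0)) =
            fun z => r z * (if W z < w then 1 else 0) := by
          funext z
          by_cases h : W z ∈ S
          · have hne : W z ≠ w := fun he => hwS (by rwa [he] at h)
            rw [if_pos h, if_pos (lt_of_le_of_ne (le_csSup hbdd h) hne)]
          · rw [if_neg h, if_neg]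
            intro hlt
            obtain ⟨s, hs, hlt'⟩ := exists_lt_of_lt_csSup hSne hlt
            exact h (hS _ _ hlt'.le hs)
        rw [heq]; exact hst w
    · have hall : ∀ q : ℝ, q ∈ S := by
        intro q
        by_contra h
        exact hU ⟨q, h⟩
      have heq : (fun z => r z * (if W z ∈ S then 1 else 0)) =
          fun z => r z * (if W z ≤ 2 then 1 else 0) := by
        funext z
        rw [if_pos (hall _), if_pos (by linarith [hW1 z])]
      rw [heq]; exact hns 2
  · have heq : (fun z => r z * (if W z ∈ S then 1 else 0)) = fun _ => (0:ℝ) := by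
      funext z
      rw [if_neg (fun h => hSne ⟨_, h⟩), mul_zero]
    rw [heq, integral_zero, abs_zero]
    exact hc


lemma layercake {r W : Z → ℝ} (hr : Measurable r) (hrb : ∀ z, |r z| ≤ 1)
    (hW : Measurable W)
    (m : ℝ → ℝ) (hm : Measurable m) {B c : ℝ} (hB : 0 ≤ B)
    (hm0 : ∀ q, 0 ≤ m q) (hmB : ∀ q, m q ≤ B)
    (hlev : ∀ t : ℝ, |∫ z, r z * (if t < m (W z) then 1 else 0) ∂μ| ≤ c) :
    |∫ z, r z * m (W z) ∂μ| ≤ B * c := by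
  set ν : Measure ℝ := volume.restrict (Ioo (0:ℝ) B) with hν
  haveI : IsFiniteMeasure ν := by
    constructor
    rw [hν, Measure.restrict_apply_univ, Real.volume_Ioo]
    exact ENNReal.ofReal_lt_top
  set F : Z → ℝ → ℝ := fun z t => r z * (if t < m (W z) then 1 else 0) with hF
  have hFmeas : Measurable (Function.uncurry F) := by
    apply (hr.comp measurable_fst).mul
    have hset : MeasurableSet {zt : Z × ℝ | zt.2 < m (W zt.1)} :=
      measurableSet_lt measurable_snd ((hm.comp hW).comp measurable_fst)
    exact Measurable.ite hset measurable_const measurable_const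
  have hFint : Integrable (Function.uncurry F) (μ.prod ν) := by
    refine (integrable_const (1:ℝ)).mono' hFmeas.aestronglyMeasurable ?_
    refine Filter.Eventually.of_forall fun zt => ?_
    rw [Real.norm_eq_abs, Function.uncurry, hF]
    simp only []
    rw [abs_mul]
    have h1 : |(if zt.2 < m (W zt.1) then (1:ℝ) else 0)| ≤ 1 := by split <;> simp
    calc |r zt.1| * _ ≤ 1 * 1 := mul_le_mul (hrb _) h1 (abs_nonneg _) zero_le_one
      _ = 1 := one_mul 1
  have step1 : ∀ z, m (W z) = ∫ t, (if t < m (W z) then (1:ℝ) else 0) ∂ν := by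
    intro z
    set a := m (W z) with ha
    have heq : (fun t => if t < a then (1:ℝ) else 0) = (Iio a).indicator (fun _ => (1:ℝ)) := by
      funext t
      by_cases h : t < a
      · rw [if_pos h, Set.indicator_of_mem (mem_Iio.mpr h)]
      · rw [if_neg h, Set.indicator_of_notMem (fun hm' => h (mem_Iio.mp hm'))]
    rw [hν, heq, setIntegral_indicator measurableSet_Iio]
    rw [setIntegral_const, Set.Ioo_inter_Iio, smul_eq_mul, mul_one]
    rw [min_eq_right (hmB (W z)), Real.volume_real_Ioo_of_le (by simpa using hm0 (W z)), sub_zero]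
  have step2 : ∫ z, r z * m (W z) ∂μ = ∫ z, ∫ t, F z t ∂ν ∂μ := by
    apply integral_congr_ae
    refine Filter.Eventually.of_forall fun z => ?_
    rw [hF]
    simp only []
    rw [integral_const_mul, ← step1 z]
  have step3 : ∫ z, ∫ t, F z t ∂ν ∂μ = ∫ t, ∫ z, F z t ∂μ ∂ν :=
    integral_integral_swap hFint
  have hg : Integrable (fun t => ∫ z, F z t ∂μ) ν := by
    have := hFint.swap.integral_prod_left
    exact this
  rw [step2, step3]
  calc |∫ t, ∫ z, F z t ∂μ ∂ν| ≤ ∫ t, |∫ z, F z t ∂μ| ∂ν := by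
        simpa [Real.norm_eq_abs] using norm_integral_le_integral_norm (fun t => ∫ z, F z t ∂μ) (μ := ν)
    _ ≤ ∫ _t, c ∂ν := by
        refine integral_mono hg.abs (integrable_const c) fun t => hlev t
    _ = B * c := by
        rw [integral_const, smul_eq_mul, hν, measureReal_restrict_apply_univ, Real.volume_real_Ioo_of_le (by linarith)]
        ring

lemma upset_bound {r W : Z → ℝ} {c : ℝ} (hr : Measurable r) (hrb : ∀ z, |r z| ≤ 1)
    (hW : Measurable W) (hW0 : ∀ z, 0 ≤ W z) (hW1 : ∀ z, W z ≤ 1) (hc : 0 ≤ c)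
    (hns : ∀ v : ℝ, |∫ z, r z * (if W z ≤ v then 1 else 0) ∂μ| ≤ c)
    (hst : ∀ v : ℝ, |∫ z, r z * (if W z < v then 1 else 0) ∂μ| ≤ c)
    (u : ℝ → ℝ) (hu : Monotone u) (t : ℝ) :
    |∫ z, r z * (if t < u (W z) then 1 else 0) ∂μ| ≤ 2 * c := by
  classical
  set S : Set ℝ := {q | u q ≤ t} with hSdef
  have hSdown : ∀ a b : ℝ, a ≤ b → b ∈ S → a ∈ S := fun a b hab hb => le_trans (hu hab) hb
  have heq : (fun z => r z * (if t < u (W z) then 1 else 0)) =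
      fun z => r z - r z * (if W z ∈ S then 1 else 0) := by
    funext z
    by_cases h : t < u (W z)
    · rw [if_pos h, if_neg (by simpa [hSdef] using h), mul_zero, mul_one, sub_zero]
    · rw [if_neg h, if_pos (by simpa [hSdef] using h), mul_zero, mul_one, sub_self]
  rw [heq]
  have hint1 : Integrable r μ := integrable_of_bdd hr hrb
  have hint2 : Integrable (fun z => r z * (if W z ∈ S then 1 else 0)) μ := by
    refine integrable_of_bdd ?_ (C := 1) ?_
    · refine hr.mul (Measurable.ite ?_ measurable_const measurable_const)
      have : {z | W z ∈ S} = W ⁻¹' (u ⁻¹' (Iic t)) := rfl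
      rw [this]
      exact hW (hu.measurable measurableSet_Iic)
    · intro z
      rw [abs_mul]
      have h1 : |(if W z ∈ S then (1:ℝ) else 0)| ≤ 1 := by split <;> simp
      calc |r z| * _ ≤ 1 * 1 := mul_le_mul (hrb _) h1 (abs_nonneg _) zero_le_one
        _ = 1 := one_mul 1
  rw [integral_sub hint1 hint2]
  have h1 : |∫ z, r z ∂μ| ≤ c := by
    have heq2 : (fun z => r z) = fun z => r z * (if W z ≤ 2 then 1 else 0) := by
      funext z
      rw [if_pos (by linarith [hW1 z]), mul_one]
    rw [heq2]
    exact hns 2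
  have h2 := downset_bound hW0 hW1 hc hns hst S hSdown
  calc |∫ z, r z ∂μ - ∫ z, r z * (if W z ∈ S then 1 else 0) ∂μ| ≤
        |∫ z, r z ∂μ| + |∫ z, r z * (if W z ∈ S then 1 else 0) ∂μ| := abs_sub _ _
    _ ≤ c + c := add_le_add h1 h2
    _ = 2 * c := by ring


/-! ### Total variation function -/

def pSums (f : ℝ → ℝ) (t : ℝ) : Set ℝ :=
  {S | ∃ (m : ℕ) (z : ℕ → ℝ), z 0 = 0 ∧ z m = t ∧ (∀ i < m, z i < z (i + 1)) ∧
      S = ∑ i ∈ Finset.range m, |f (z (i + 1)) - f (z i)|}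

lemma pSums_nonneg {f : ℝ → ℝ} {t S : ℝ} (hS : S ∈ pSums f t) : 0 ≤ S := by
  obtain ⟨m, z, _, _, _, rfl⟩ := hS
  exact Finset.sum_nonneg fun i _ => abs_nonneg _

lemma pSums_mem_basic {f : ℝ → ℝ} {t : ℝ} (ht : 0 < t) : |f t - f 0| ∈ pSums f t := by
  refine ⟨1, fun i => if i = 0 then 0 else t, by simp, by simp, ?_, ?_⟩
  · intro i hi
    interval_cases i
    simpa using ht
  · simp

lemma pSums_append {f : ℝ → ℝ} {s t S : ℝ} (hst : s < t) (hS : S ∈ pSums f s) :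
    S + |f t - f s| ∈ pSums f t := by
  obtain ⟨m, z, h0, hm, hinc, rfl⟩ := hS
  refine ⟨m + 1, fun i => if i ≤ m then z i else t, ?_, ?_, ?_, ?_⟩
  · simp [h0]
  · simp
  · intro i hi
    dsimp only
    rcases Nat.lt_or_ge i m with h | h
    · rw [if_pos (le_of_lt h), if_pos (Nat.succ_le_of_lt h)]
      exact hinc i h
    · have : i = m := le_antisymm (Nat.lt_succ_iff.mp hi) h
      subst this
      rw [if_pos (le_refl i), if_neg (by omega), hm]
      exact hst
  · rw [Finset.sum_range_succ]
    congr 1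
    · apply Finset.sum_congr rfl
      intro i hi
      have hi' : i < m := Finset.mem_range.mp hi
      dsimp only
      rw [if_pos (le_of_lt hi'), if_pos (Nat.succ_le_of_lt hi')]
    · dsimp only
      rw [if_pos (le_refl m), if_neg (by omega), hm]

def Vf (f : ℝ → ℝ) (t : ℝ) : ℝ := if t ≤ 0 then 0 else sSup (pSums f t)

section VfProps

variable {f : ℝ → ℝ} (hBV : ∀ S ∈ pSums f 1, S ≤ 1)

include hBV

lemma pSums_le_one {t : ℝ} (ht0 : 0 < t) (ht1 : t ≤ 1) : ∀ S ∈ pSums f t, S ≤ 1 := by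
  intro S hS
  rcases eq_or_lt_of_le ht1 with h | h
  · exact hBV S (h ▸ hS)
  · have := hBV _ (pSums_append h hS)
    have := abs_nonneg (f 1 - f t)
    linarith

lemma Vf_zero : Vf f 0 = 0 := if_pos le_rfl

lemma Vf_le_one {t : ℝ} (ht0 : 0 ≤ t) (ht1 : t ≤ 1) : Vf f t ≤ 1 := by
  rcases eq_or_lt_of_le ht0 with h | h
  · rw [Vf, if_pos h.symm.le]; norm_num
  · rw [Vf, if_neg (not_le.mpr h)]
    exact csSup_le ⟨_, pSums_mem_basic h⟩ (pSums_le_one hBV h ht1)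

lemma Vf_diff_le {s t : ℝ} (hs : 0 ≤ s) (hst : s < t) (ht : t ≤ 1) :
    Vf f s + |f t - f s| ≤ Vf f t := by
  have ht0 : 0 < t := lt_of_le_of_lt hs hst
  have hbdd : BddAbove (pSums f t) := ⟨1, fun S hS => pSums_le_one hBV ht0 ht S hS⟩
  rcases eq_or_lt_of_le hs with h | h
  · rw [← h, Vf_zero hBV, zero_add, ← h] at *
    rw [Vf, if_neg (not_le.mpr ht0)]
    exact le_csSup hbdd (pSums_mem_basic ht0)
  · rw [Vf, if_neg (not_le.mpr h), Vf, if_neg (not_le.mpr ht0)]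
    have : ∀ S ∈ pSums f s, S ≤ sSup (pSums f t) - |f t - f s| := by
      intro S hS
      have := le_csSup hbdd (pSums_append hst hS)
      linarith
    have hle := csSup_le ⟨_, pSums_mem_basic h⟩ this
    linarith

lemma Vf_nonneg {t : ℝ} (ht0 : 0 ≤ t) (ht1 : t ≤ 1) : 0 ≤ Vf f t := by
  rcases eq_or_lt_of_le ht0 with h | h
  · rw [← h, Vf_zero hBV]
  · have := Vf_diff_le hBV le_rfl h ht1
    rw [Vf_zero hBV] at this
    have := abs_nonneg (f t - f 0)
    linarith

lemma Vf_abs_le {t : ℝ} (ht0 : 0 ≤ t) (ht1 : t ≤ 1) : |f t - f 0| ≤ Vf f t := by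
  rcases eq_or_lt_of_le ht0 with h | h
  · rw [← h, Vf_zero hBV]; simp
  · have := Vf_diff_le hBV le_rfl h ht1
    rw [Vf_zero hBV] at this
    linarith

end VfProps

/-! ### clamp and monotone parts -/

def cl (q : ℝ) : ℝ := max 0 (min q 1)

lemma cl_mono : Monotone cl := fun a b hab =>
  max_le_max le_rfl (min_le_min hab le_rfl)

lemma cl_mem (q : ℝ) : cl q ∈ Icc (0:ℝ) 1 :=
  ⟨le_max_left _ _, max_le zero_le_one (min_le_right _ _)⟩

lemma cl_eq {q : ℝ} (h : q ∈ Icc (0:ℝ) 1) : cl q = q := by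
  rw [cl, min_eq_left h.2, max_eq_right h.1]

def uplus (f : ℝ → ℝ) (q : ℝ) : ℝ := (Vf f (cl q) + (f (cl q) - f 0)) / 2

def uminus (f : ℝ → ℝ) (q : ℝ) : ℝ := (Vf f (cl q) - (f (cl q) - f 0)) / 2

section UProps

variable {f : ℝ → ℝ} (hBV : ∀ S ∈ pSums f 1, S ≤ 1)

include hBV

lemma uplus_mono : Monotone (uplus f) := by
  intro a b hab
  have h := cl_mono hab
  rcases eq_or_lt_of_le h with h' | h'
  · rw [uplus, uplus, h']
  · have hd := Vf_diff_le hBV (cl_mem a).1 h' (cl_mem b).2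
    have : -(f (cl b) - f (cl a)) ≤ |f (cl b) - f (cl a)| := neg_le_abs _
    rw [uplus, uplus]
    have : f (cl a) - f (cl b) ≤ |f (cl b) - f (cl a)| := by
      rw [abs_sub_comm]; exact le_abs_self _
    linarith

lemma uminus_mono : Monotone (uminus f) := by
  intro a b hab
  have h := cl_mono hab
  rcases eq_or_lt_of_le h with h' | h'
  · rw [uminus, uminus, h']
  · have hd := Vf_diff_le hBV (cl_mem a).1 h' (cl_mem b).2
    have : f (cl b) - f (cl a) ≤ |f (cl b) - f (cl a)| := le_abs_self _
    rw [uminus, uminus]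
    linarith

lemma uplus_nonneg (q : ℝ) : 0 ≤ uplus f q := by
  have := Vf_abs_le hBV (cl_mem q).1 (cl_mem q).2
  have : -(f (cl q) - f 0) ≤ Vf f (cl q) := le_trans (neg_le_abs _) this
  rw [uplus]; linarith

lemma uplus_le_one (q : ℝ) : uplus f q ≤ 1 := by
  have h1 := Vf_abs_le hBV (cl_mem q).1 (cl_mem q).2
  have h2 : f (cl q) - f 0 ≤ Vf f (cl q) := le_trans (le_abs_self _) h1
  have h3 := Vf_le_one hBV (cl_mem q).1 (cl_mem q).2
  rw [uplus]; linarith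

lemma uminus_nonneg (q : ℝ) : 0 ≤ uminus f q := by
  have h1 := Vf_abs_le hBV (cl_mem q).1 (cl_mem q).2
  have : f (cl q) - f 0 ≤ Vf f (cl q) := le_trans (le_abs_self _) h1
  rw [uminus]; linarith

lemma uminus_le_one (q : ℝ) : uminus f q ≤ 1 := by
  have h1 := Vf_abs_le hBV (cl_mem q).1 (cl_mem q).2
  have h2 : -(f (cl q) - f 0) ≤ Vf f (cl q) := le_trans (neg_le_abs _) h1
  have h3 := Vf_le_one hBV (cl_mem q).1 (cl_mem q).2
  rw [uminus]; linarith

lemma f_decomp (q : ℝ) (hq : q ∈ Icc (0:ℝ) 1) :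
    f q = f 0 + uplus f q - uminus f q := by
  rw [uplus, uminus, cl_eq hq]
  ring

end UProps

end Stmt0Aux

/-- If `p⋆` is `(G, H, ε)`-step calibrated, then `p⋆` is an
`(L, G, H, 20ε)`-panpredictor. -/
theorem stmt0 {X : Type*} [MeasurableSpace X]
    (D : Measure (X × Bool)) [IsProbabilityMeasure D]
    (ε : ℝ) (hε : 0 < ε)
    -- the loss class L ⊆ L_BV
    (L : Set (ℝ → Bool → ℝ))
    (hLmeas : ∀ ℓ ∈ L, ∀ y : Bool, Measurable (fun q => ℓ q y))
    (hLbdd : ∀ ℓ ∈ L, ∀ q ∈ Icc (0:ℝ) 1, ∀ y : Bool, ℓ q y ∈ Icc (-1:ℝ) 1)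
    (hLBV : ∀ ℓ ∈ L, ∀ y : Bool, ∀ S ∈ partitionSums (fun q => ℓ q y), S ≤ 1)
    -- the groups G, each of positive probability
    (G : Set (X → Bool)) (hGmeas : ∀ g ∈ G, Measurable g)
    (hGpos : ∀ g ∈ G, 0 < Pg D g)
    -- the nonempty hypothesis class H
    (H : Set (X → ℝ)) (hHne : H.Nonempty)
    (hHmeas : ∀ h ∈ H, Measurable h)
    (hHrange : ∀ h ∈ H, ∀ x, h x ∈ Icc (0:ℝ) 1)
    -- post-processings k ℓ for each loss ℓ ∈ L
    (k : (ℝ → Bool → ℝ) → ℝ → ℝ)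
    (hkmeas : ∀ ℓ ∈ L, Measurable (k ℓ))
    (hkrange : ∀ ℓ ∈ L, ∀ q ∈ Icc (0:ℝ) 1, k ℓ q ∈ Icc (0:ℝ) 1)
    (hkopt : ∀ ℓ ∈ L, ∀ q ∈ Icc (0:ℝ) 1, ∀ yhat ∈ Icc (0:ℝ) 1,
      q * ℓ (k ℓ q) true + (1 - q) * ℓ (k ℓ q) false ≤ q * ℓ yhat true + (1 - q) * ℓ yhat false)
    -- the predictor p⋆
    (p : X → ℝ) (hpmeas : Measurable p) (hprange : ∀ x, p x ∈ Icc (0:ℝ) 1)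
    -- (G, H, ε)-step calibration
    (hcal : ∀ v ∈ Icc (0:ℝ) 1, ∀ w ∈ Icc (0:ℝ) 1, ∀ h ∈ H, ∀ g ∈ G,
      |condE D g (fun z => (lab z.2 - p z.1) * (if p z.1 ≤ v then 1 else 0) *
        (if h z.1 ≤ w then 1 else 0))| ≤ ε * Real.sqrt (1 / Pg D g)) :
    -- conclusion: (L, G, H, 20 ε)-panprediction
    ∀ ℓ ∈ L, ∀ g ∈ G,
      condE D g (fun z => ℓ (k ℓ (p z.1)) z.2) ≤
        sInf ((fun h => condE D g (fun z => ℓ (h z.1) z.2)) '' H) +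
          20 * ε * Real.sqrt (1 / Pg D g) := by
  intro ℓ hL g hg
  classical
  have hc0 : 0 < ε * Real.sqrt (1 / Pg D g) := by
    have hpg := hGpos g hg
    have : (0:ℝ) < 1 / Pg D g := by positivity
    exact mul_pos hε (Real.sqrt_pos.mpr this)
  set c := ε * Real.sqrt (1 / Pg D g) with hcdef
  have key : ∀ h ∈ H, condE D g (fun z => ℓ (k ℓ (p z.1)) z.2) ≤
      condE D g (fun z => ℓ (h z.1) z.2) + 20 * c := by
    intro h hh
    set μ := D[|{z : X × Bool | g z.1 = true}] with hμdef
    have hgm : Measurable fun z : X × Bool => g z.1 := (hGmeas g hg).comp measurable_fst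
    have hDS : D {z : X × Bool | g z.1 = true} ≠ 0 := by
      intro h0
      have hpg := hGpos g hg
      rw [Pg, h0] at hpg
      simp at hpg
    haveI hPμ : IsProbabilityMeasure μ := by
      rw [hμdef]; exact cond_isProbabilityMeasure hDS
    -- the centered residual
    set r : X × Bool → ℝ := fun z => lab z.2 - p z.1 with hrdef
    have hrmeas : Measurable r := by
      rw [hrdef]
      exact ((measurable_of_finite lab).comp measurable_snd).sub (hpmeas.comp measurable_fst)
    have hrb : ∀ z, |r z| ≤ 1 := by
      rintro ⟨x, y⟩
      have h1 := (hprange x).1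
      have h2 := (hprange x).2
      rw [hrdef, abs_le]
      cases y
      · constructor <;> simp [lab] <;> linarith
      · constructor <;> simp [lab] <;> linarith
    -- threshold bounds for p
    have hbase1 : ∀ v ∈ Icc (0:ℝ) 1, |∫ z, r z * (if p z.1 ≤ v then 1 else 0) ∂μ| ≤ c := by
      intro v hv
      have hcalv := hcal v hv 1 ⟨zero_le_one, le_rfl⟩ h hh g hg
      have he : (fun z : X × Bool => (lab z.2 - p z.1) * (if p z.1 ≤ v then 1 else 0) *
          (if h z.1 ≤ (1:ℝ) then 1 else 0)) = fun z => r z * (if p z.1 ≤ v then 1 else 0) := by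
        funext z
        rw [if_pos (hHrange h hh z.1).2, hrdef]
        ring
      rw [condE, he] at hcalv
      rw [← hμdef] at hcalv
      exact hcalv
    have hns1 : ∀ v : ℝ, |∫ z, r z * (if p z.1 ≤ v then 1 else 0) ∂μ| ≤ c := by
      intro v
      rcases lt_or_ge v 0 with hv | hv
      · have he : (fun z : X × Bool => r z * (if p z.1 ≤ v then 1 else 0)) = fun _ => (0:ℝ) := by
          funext z
          rw [if_neg (by linarith [(hprange z.1).1]), mul_zero]
        rw [he, integral_zero, abs_zero]
        exact hc0.le
      · rcases le_or_gt v 1 with hv1 | hv1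
        · exact hbase1 v ⟨hv, hv1⟩
        · have he : (fun z : X × Bool => r z * (if p z.1 ≤ v then 1 else 0)) =
              fun z => r z * (if p z.1 ≤ (1:ℝ) then 1 else 0) := by
            funext z
            rw [if_pos (by linarith [(hprange z.1).2]), if_pos (hprange z.1).2]
          rw [he]
          exact hbase1 1 ⟨zero_le_one, le_rfl⟩
    have hst1 : ∀ v : ℝ, |∫ z, r z * (if p z.1 < v then 1 else 0) ∂μ| ≤ c :=
      Stmt0Aux.strict_of_nonstrict hrmeas hrb (hpmeas.comp measurable_fst) hns1
    -- threshold bounds for h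
    have hbase2 : ∀ w ∈ Icc (0:ℝ) 1, |∫ z, r z * (if h z.1 ≤ w then 1 else 0) ∂μ| ≤ c := by
      intro w hw
      have hcalv := hcal 1 ⟨zero_le_one, le_rfl⟩ w hw h hh g hg
      have he : (fun z : X × Bool => (lab z.2 - p z.1) * (if p z.1 ≤ (1:ℝ) then 1 else 0) *
          (if h z.1 ≤ w then 1 else 0)) = fun z => r z * (if h z.1 ≤ w then 1 else 0) := by
        funext z
        rw [if_pos (hprange z.1).2, hrdef]
        ring
      rw [condE, he] at hcalv
      rw [← hμdef] at hcalv
      exact hcalv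
    have hns2 : ∀ w : ℝ, |∫ z, r z * (if h z.1 ≤ w then 1 else 0) ∂μ| ≤ c := by
      intro w
      rcases lt_or_ge w 0 with hw | hw
      · have he : (fun z : X × Bool => r z * (if h z.1 ≤ w then 1 else 0)) = fun _ => (0:ℝ) := by
          funext z
          rw [if_neg (by linarith [(hHrange h hh z.1).1]), mul_zero]
        rw [he, integral_zero, abs_zero]
        exact hc0.le
      · rcases le_or_gt w 1 with hw1 | hw1
        · exact hbase2 w ⟨hw, hw1⟩
        · have he : (fun z : X × Bool => r z * (if h z.1 ≤ w then 1 else 0)) =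
              fun z => r z * (if h z.1 ≤ (1:ℝ) then 1 else 0) := by
            funext z
            rw [if_pos (by linarith [(hHrange h hh z.1).2]), if_pos (hHrange h hh z.1).2]
          rw [he]
          exact hbase2 1 ⟨zero_le_one, le_rfl⟩
    have hst2 : ∀ w : ℝ, |∫ z, r z * (if h z.1 < w then 1 else 0) ∂μ| ≤ c :=
      Stmt0Aux.strict_of_nonstrict hrmeas hrb ((hHmeas h hh).comp measurable_fst) hns2
    -- the slope function and its antitonicity
    set sfun : ℝ → ℝ := fun q => ℓ (k ℓ (Stmt0Aux.cl q)) true - ℓ (k ℓ (Stmt0Aux.cl q)) false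
      with hsdef
    have hsanti : Antitone sfun := by
      intro a b hab
      have hcc := Stmt0Aux.cl_mono hab
      rcases eq_or_lt_of_le hcc with h' | h'
      · rw [hsdef]; dsimp only; rw [h']
      · have hma := Stmt0Aux.cl_mem a
        have hmb := Stmt0Aux.cl_mem b
        have h1 := hkopt ℓ hL _ hma (k ℓ (Stmt0Aux.cl b)) (hkrange ℓ hL _ hmb)
        have h2 := hkopt ℓ hL _ hmb (k ℓ (Stmt0Aux.cl a)) (hkrange ℓ hL _ hma)
        rw [hsdef]; dsimp only
        have hkey : (Stmt0Aux.cl b - Stmt0Aux.cl a) *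
            ((ℓ (k ℓ (Stmt0Aux.cl b)) true - ℓ (k ℓ (Stmt0Aux.cl b)) false) -
             (ℓ (k ℓ (Stmt0Aux.cl a)) true - ℓ (k ℓ (Stmt0Aux.cl a)) false)) ≤ 0 := by
          nlinarith [h1, h2]
        have h3 : 0 < Stmt0Aux.cl b - Stmt0Aux.cl a := sub_pos.mpr h'
        by_contra hcon
        push_neg at hcon
        have := mul_pos h3 (sub_pos.mpr hcon)
        linarith
    have hsb : ∀ q, 0 ≤ sfun q + 2 ∧ sfun q + 2 ≤ 4 := by
      intro q
      have h1 := hLbdd ℓ hL _ (hkrange ℓ hL _ (Stmt0Aux.cl_mem q)) true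
      have h2 := hLbdd ℓ hL _ (hkrange ℓ hL _ (Stmt0Aux.cl_mem q)) false
      rw [hsdef]; dsimp only
      constructor
      · linarith [h1.1, h2.2]
      · linarith [h1.2, h2.1]
    have hmanti : Antitone (fun q => sfun q + 2) := fun a b hab => by
      have := hsanti hab; dsimp only; linarith
    have T1m : |∫ z, r z * (sfun (p z.1) + 2) ∂μ| ≤ 4 * c := by
      refine Stmt0Aux.layercake (W := fun z : X × Bool => p z.1) hrmeas hrb (hpmeas.comp measurable_fst)
        (fun q => sfun q + 2) hmanti.measurable (by norm_num)
        (fun q => (hsb q).1) (fun q => (hsb q).2) ?_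
      intro t
      have hdown : ∀ a b : ℝ, a ≤ b → b ∈ {q : ℝ | t < sfun q + 2} → a ∈ {q : ℝ | t < sfun q + 2} :=
        fun a b hab hb => by
          have h2 := hsanti hab
          have hb' : t < sfun b + 2 := hb
          show t < sfun a + 2
          linarith
      have hd := Stmt0Aux.downset_bound (μ := μ) (r := r) (W := fun z : X × Bool => p z.1)
        (fun z => (hprange z.1).1) (fun z => (hprange z.1).2)
        hc0.le hns1 hst1 {q : ℝ | t < sfun q + 2} hdown
      have he : (fun z : X × Bool => r z * (if t < sfun (p z.1) + 2 then 1 else 0)) =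
          fun z => r z * (if p z.1 ∈ {q : ℝ | t < sfun q + 2} then 1 else 0) := by
        funext z
        exact congrArg (fun x => r z * x) (if_congr Iff.rfl rfl rfl)
      rw [he]
      exact hd
    have hintr : Integrable r μ := Stmt0Aux.integrable_of_bdd hrmeas hrb
    have hintm : Integrable (fun z => r z * (sfun (p z.1) + 2)) μ := by
      refine Stmt0Aux.integrable_of_bdd
        (hrmeas.mul (((hmanti.measurable).comp (hpmeas.comp measurable_fst)))) (C := 4) ?_
      intro z
      rw [abs_mul]
      have hb4 := hsb (p z.1)
      have habs : |sfun (p z.1) + 2| ≤ 4 := abs_le.mpr ⟨by linarith [hb4.1], hb4.2⟩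
      calc |r z| * |sfun (p z.1) + 2| ≤ 1 * 4 :=
            mul_le_mul (hrb z) habs (abs_nonneg _) zero_le_one
        _ = 4 := by ring
    have hR : |∫ z, r z ∂μ| ≤ c := by
      have he2 : (fun z : X × Bool => r z) = fun z => r z * (if p z.1 ≤ (2:ℝ) then 1 else 0) := by
        funext z
        rw [if_pos (by linarith [(hprange z.1).2]), mul_one]
      rw [he2]
      exact hns1 2
    have T1 : |∫ z, r z * sfun (p z.1) ∂μ| ≤ 6 * c := by
      have he : (fun z : X × Bool => r z * sfun (p z.1)) =
          fun z => (r z * (sfun (p z.1) + 2)) - 2 * r z := by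
        funext z; ring
      rw [he, integral_sub hintm (hintr.const_mul 2), integral_const_mul]
      calc |∫ z, r z * (sfun (p z.1) + 2) ∂μ - 2 * ∫ z, r z ∂μ| ≤
            |∫ z, r z * (sfun (p z.1) + 2) ∂μ| + |2 * ∫ z, r z ∂μ| := Stmt0Aux.abs_sub'' _ _
        _ ≤ 4 * c + 2 * c := by
            refine add_le_add T1m ?_
            rw [abs_mul]
            have : |(2:ℝ)| = 2 := by norm_num
            rw [this]
            linarith [hR]
        _ = 6 * c := by ring
    -- the h-side: each label separately
    have Ty : ∀ y : Bool, |∫ z, r z * ℓ (h z.1) y ∂μ| ≤ 5 * c := by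
      intro y
      set f : ℝ → ℝ := fun q => ℓ q y with hfdef
      have hBV : ∀ S ∈ Stmt0Aux.pSums f 1, S ≤ 1 := hLBV ℓ hL y
      have hintu1 : Integrable (fun z => r z * Stmt0Aux.uplus f (h z.1)) μ := by
        refine Stmt0Aux.integrable_of_bdd
          (hrmeas.mul (((Stmt0Aux.uplus_mono hBV).measurable).comp
            ((hHmeas h hh).comp measurable_fst))) (C := 1) ?_
        intro z
        rw [abs_mul]
        have habs : |Stmt0Aux.uplus f (h z.1)| ≤ 1 :=
          abs_le.mpr ⟨by linarith [Stmt0Aux.uplus_nonneg hBV (h z.1)],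
            Stmt0Aux.uplus_le_one hBV (h z.1)⟩
        calc |r z| * |Stmt0Aux.uplus f (h z.1)| ≤ 1 * 1 :=
              mul_le_mul (hrb z) habs (abs_nonneg _) zero_le_one
          _ = 1 := by ring
      have hintu2 : Integrable (fun z => r z * Stmt0Aux.uminus f (h z.1)) μ := by
        refine Stmt0Aux.integrable_of_bdd
          (hrmeas.mul (((Stmt0Aux.uminus_mono hBV).measurable).comp
            ((hHmeas h hh).comp measurable_fst))) (C := 1) ?_
        intro z
        rw [abs_mul]
        have habs : |Stmt0Aux.uminus f (h z.1)| ≤ 1 :=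
          abs_le.mpr ⟨by linarith [Stmt0Aux.uminus_nonneg hBV (h z.1)],
            Stmt0Aux.uminus_le_one hBV (h z.1)⟩
        calc |r z| * |Stmt0Aux.uminus f (h z.1)| ≤ 1 * 1 :=
              mul_le_mul (hrb z) habs (abs_nonneg _) zero_le_one
          _ = 1 := by ring
      have hu1 : |∫ z, r z * Stmt0Aux.uplus f (h z.1) ∂μ| ≤ 1 * (2 * c) := by
        refine Stmt0Aux.layercake (W := fun z : X × Bool => h z.1) hrmeas hrb ((hHmeas h hh).comp measurable_fst)
          (Stmt0Aux.uplus f) (Stmt0Aux.uplus_mono hBV).measurable zero_le_one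
          (Stmt0Aux.uplus_nonneg hBV) (Stmt0Aux.uplus_le_one hBV) ?_
        intro t
        exact Stmt0Aux.upset_bound hrmeas hrb ((hHmeas h hh).comp measurable_fst)
          (fun z => (hHrange h hh z.1).1) (fun z => (hHrange h hh z.1).2) hc0.le hns2 hst2
          (Stmt0Aux.uplus f) (Stmt0Aux.uplus_mono hBV) t
      have hu2 : |∫ z, r z * Stmt0Aux.uminus f (h z.1) ∂μ| ≤ 1 * (2 * c) := by
        refine Stmt0Aux.layercake (W := fun z : X × Bool => h z.1) hrmeas hrb ((hHmeas h hh).comp measurable_fst)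
          (Stmt0Aux.uminus f) (Stmt0Aux.uminus_mono hBV).measurable zero_le_one
          (Stmt0Aux.uminus_nonneg hBV) (Stmt0Aux.uminus_le_one hBV) ?_
        intro t
        exact Stmt0Aux.upset_bound hrmeas hrb ((hHmeas h hh).comp measurable_fst)
          (fun z => (hHrange h hh z.1).1) (fun z => (hHrange h hh z.1).2) hc0.le hns2 hst2
          (Stmt0Aux.uminus f) (Stmt0Aux.uminus_mono hBV) t
      have hf0 : |f 0| ≤ 1 := by
        have := hLbdd ℓ hL 0 ⟨le_rfl, zero_le_one⟩ y
        exact abs_le.mpr ⟨this.1, this.2⟩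
      have he : (fun z : X × Bool => r z * f (h z.1)) = fun z =>
          f 0 * r z + (r z * Stmt0Aux.uplus f (h z.1) - r z * Stmt0Aux.uminus f (h z.1)) := by
        funext z
        rw [Stmt0Aux.f_decomp hBV (h z.1) (hHrange h hh z.1)]
        ring
      have hchange : (fun z : X × Bool => r z * ℓ (h z.1) y) = fun z : X × Bool => r z * f (h z.1) := rfl
      have hgsub : Integrable (fun z : X × Bool =>
          r z * Stmt0Aux.uplus f (h z.1) - r z * Stmt0Aux.uminus f (h z.1)) μ :=
        hintu1.sub hintu2
      rw [hchange, he, integral_add (hintr.const_mul (f 0)) hgsub,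
        integral_sub hintu1 hintu2, integral_const_mul]
      calc |f 0 * ∫ z, r z ∂μ + (∫ z, r z * Stmt0Aux.uplus f (h z.1) ∂μ -
              ∫ z, r z * Stmt0Aux.uminus f (h z.1) ∂μ)| ≤
            |f 0 * ∫ z, r z ∂μ| + |∫ z, r z * Stmt0Aux.uplus f (h z.1) ∂μ -
              ∫ z, r z * Stmt0Aux.uminus f (h z.1) ∂μ| := abs_add_le _ _
        _ ≤ |f 0 * ∫ z, r z ∂μ| + (|∫ z, r z * Stmt0Aux.uplus f (h z.1) ∂μ| +
              |∫ z, r z * Stmt0Aux.uminus f (h z.1) ∂μ|) := by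
            have := Stmt0Aux.abs_sub'' (∫ z, r z * Stmt0Aux.uplus f (h z.1) ∂μ)
              (∫ z, r z * Stmt0Aux.uminus f (h z.1) ∂μ)
            linarith
        _ ≤ 1 * c + (1 * (2 * c) + 1 * (2 * c)) := by
            refine add_le_add ?_ (add_le_add hu1 hu2)
            rw [abs_mul]
            calc |f 0| * |∫ z, r z ∂μ| ≤ 1 * c :=
                  mul_le_mul hf0 hR (abs_nonneg _) zero_le_one
              _ = 1 * c := rfl
        _ = 5 * c := by ring
    have hintd1 : Integrable (fun z => r z * ℓ (h z.1) true) μ := by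
      refine Stmt0Aux.integrable_of_bdd
        (hrmeas.mul ((hLmeas ℓ hL true).comp ((hHmeas h hh).comp measurable_fst))) (C := 1) ?_
      intro z
      rw [abs_mul]
      have h1 := hLbdd ℓ hL _ (hHrange h hh z.1) true
      have habs : |ℓ (h z.1) true| ≤ 1 := abs_le.mpr ⟨h1.1, h1.2⟩
      calc |r z| * |ℓ (h z.1) true| ≤ 1 * 1 := mul_le_mul (hrb z) habs (abs_nonneg _) zero_le_one
        _ = 1 := by ring
    have hintd2 : Integrable (fun z => r z * ℓ (h z.1) false) μ := by
      refine Stmt0Aux.integrable_of_bdd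
        (hrmeas.mul ((hLmeas ℓ hL false).comp ((hHmeas h hh).comp measurable_fst))) (C := 1) ?_
      intro z
      rw [abs_mul]
      have h1 := hLbdd ℓ hL _ (hHrange h hh z.1) false
      have habs : |ℓ (h z.1) false| ≤ 1 := abs_le.mpr ⟨h1.1, h1.2⟩
      calc |r z| * |ℓ (h z.1) false| ≤ 1 * 1 := mul_le_mul (hrb z) habs (abs_nonneg _) zero_le_one
        _ = 1 := by ring
    have T2 : |∫ z, r z * (ℓ (h z.1) true - ℓ (h z.1) false) ∂μ| ≤ 10 * c := by
      have he : (fun z : X × Bool => r z * (ℓ (h z.1) true - ℓ (h z.1) false)) =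
          fun z => r z * ℓ (h z.1) true - r z * ℓ (h z.1) false := by
        funext z; ring
      rw [he, integral_sub hintd1 hintd2]
      calc |∫ z, r z * ℓ (h z.1) true ∂μ - ∫ z, r z * ℓ (h z.1) false ∂μ| ≤
            |∫ z, r z * ℓ (h z.1) true ∂μ| + |∫ z, r z * ℓ (h z.1) false ∂μ| :=
              Stmt0Aux.abs_sub'' _ _
        _ ≤ 5 * c + 5 * c := add_le_add (Ty true) (Ty false)
        _ = 10 * c := by ring
    -- pointwise comparison
    have hptwise : ∀ z : X × Bool, ℓ (k ℓ (p z.1)) z.2 - ℓ (h z.1) z.2 ≤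
        r z * sfun (p z.1) - r z * (ℓ (h z.1) true - ℓ (h z.1) false) := by
      intro z
      obtain ⟨x, y⟩ := z
      have hq := hprange x
      have ht := hHrange h hh x
      have hcl : Stmt0Aux.cl (p x) = p x := Stmt0Aux.cl_eq hq
      have hko := hkopt ℓ hL (p x) hq (h x) ht
      rw [hsdef, hrdef]
      dsimp only
      rw [hcl]
      cases y <;> simp only [lab, if_true, if_false, Bool.false_eq_true] <;> nlinarith [hko]
    -- integrability of the loss terms
    have hf1meas : Measurable (fun z : X × Bool => ℓ (k ℓ (p z.1)) z.2) := by
      have he : (fun z : X × Bool => ℓ (k ℓ (p z.1)) z.2) = fun z =>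
          lab z.2 * ℓ (k ℓ (p z.1)) true + (1 - lab z.2) * ℓ (k ℓ (p z.1)) false := by
        funext z
        obtain ⟨x, y⟩ := z
        cases y <;> simp [lab]
      rw [he]
      have hm1 : Measurable (fun z : X × Bool => lab z.2) :=
        (measurable_of_finite lab).comp measurable_snd
      have hm2 : Measurable (fun z : X × Bool => ℓ (k ℓ (p z.1)) true) :=
        (hLmeas ℓ hL true).comp ((hkmeas ℓ hL).comp (hpmeas.comp measurable_fst))
      have hm3 : Measurable (fun z : X × Bool => ℓ (k ℓ (p z.1)) false) :=
        (hLmeas ℓ hL false).comp ((hkmeas ℓ hL).comp (hpmeas.comp measurable_fst))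
      exact (hm1.mul hm2).add ((measurable_const.sub hm1).mul hm3)
    have hf2meas : Measurable (fun z : X × Bool => ℓ (h z.1) z.2) := by
      have he : (fun z : X × Bool => ℓ (h z.1) z.2) = fun z =>
          lab z.2 * ℓ (h z.1) true + (1 - lab z.2) * ℓ (h z.1) false := by
        funext z
        obtain ⟨x, y⟩ := z
        cases y <;> simp [lab]
      rw [he]
      have hm1 : Measurable (fun z : X × Bool => lab z.2) :=
        (measurable_of_finite lab).comp measurable_snd
      have hm2 : Measurable (fun z : X × Bool => ℓ (h z.1) true) :=
        (hLmeas ℓ hL true).comp ((hHmeas h hh).comp measurable_fst)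
      have hm3 : Measurable (fun z : X × Bool => ℓ (h z.1) false) :=
        (hLmeas ℓ hL false).comp ((hHmeas h hh).comp measurable_fst)
      exact (hm1.mul hm2).add ((measurable_const.sub hm1).mul hm3)
    have hint1 : Integrable (fun z : X × Bool => ℓ (k ℓ (p z.1)) z.2) μ := by
      refine Stmt0Aux.integrable_of_bdd hf1meas (C := 1) ?_
      intro z
      have h1 := hLbdd ℓ hL _ (hkrange ℓ hL _ (hprange z.1)) z.2
      exact abs_le.mpr ⟨h1.1, h1.2⟩
    have hint2 : Integrable (fun z : X × Bool => ℓ (h z.1) z.2) μ := by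
      refine Stmt0Aux.integrable_of_bdd hf2meas (C := 1) ?_
      intro z
      have h1 := hLbdd ℓ hL _ (hHrange h hh z.1) z.2
      exact abs_le.mpr ⟨h1.1, h1.2⟩
    have hintS : Integrable (fun z => r z * sfun (p z.1)) μ := by
      have he : (fun z : X × Bool => r z * sfun (p z.1)) =
          fun z => (r z * (sfun (p z.1) + 2)) - 2 * r z := by
        funext z; ring
      rw [he]
      exact hintm.sub (hintr.const_mul 2)
    have hintD : Integrable (fun z => r z * (ℓ (h z.1) true - ℓ (h z.1) false)) μ := by
      have he : (fun z : X × Bool => r z * (ℓ (h z.1) true - ℓ (h z.1) false)) =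
          fun z => r z * ℓ (h z.1) true - r z * ℓ (h z.1) false := by
        funext z; ring
      rw [he]
      exact hintd1.sub hintd2
    -- put everything together
    have hmain : ∫ z, ℓ (k ℓ (p z.1)) z.2 ∂μ ≤ ∫ z, ℓ (h z.1) z.2 ∂μ + 16 * c := by
      have hsub : ∫ z, ℓ (k ℓ (p z.1)) z.2 ∂μ - ∫ z, ℓ (h z.1) z.2 ∂μ =
          ∫ z, (ℓ (k ℓ (p z.1)) z.2 - ℓ (h z.1) z.2) ∂μ := (integral_sub hint1 hint2).symm
      have hmono : ∫ z, (ℓ (k ℓ (p z.1)) z.2 - ℓ (h z.1) z.2) ∂μ ≤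
          ∫ z, (r z * sfun (p z.1) - r z * (ℓ (h z.1) true - ℓ (h z.1) false)) ∂μ :=
        integral_mono (hint1.sub hint2) (hintS.sub hintD) hptwise
      rw [integral_sub hintS hintD] at hmono
      have b1 : ∫ z, r z * sfun (p z.1) ∂μ ≤ 6 * c := le_trans (le_abs_self _) T1
      have b2 : -(10 * c) ≤ ∫ z, r z * (ℓ (h z.1) true - ℓ (h z.1) false) ∂μ :=
        (abs_le.mp T2).1
      linarith
    have hgoal : condE D g (fun z => ℓ (k ℓ (p z.1)) z.2) = ∫ z, ℓ (k ℓ (p z.1)) z.2 ∂μ := by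
      rw [condE, ← hμdef]
    have hgoal2 : condE D g (fun z => ℓ (h z.1) z.2) = ∫ z, ℓ (h z.1) z.2 ∂μ := by
      rw [condE, ← hμdef]
    rw [hgoal, hgoal2]
    linarith [hmain, hc0]
  have hne : ((fun h => condE D g (fun z => ℓ (h z.1) z.2)) '' H).Nonempty := hHne.image _
  have hlb : condE D g (fun z => ℓ (k ℓ (p z.1)) z.2) - 20 * c ≤
      sInf ((fun h => condE D g (fun z => ℓ (h z.1) z.2)) '' H) := by
    refine le_csInf hne ?_
    rintro b ⟨h, hh, rfl⟩
    linarith [key h hh]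
  have h20 : 20 * ε * Real.sqrt (1 / Pg D g) = 20 * c := by rw [hcdef]; ring
  rw [h20]
  linarith [hlb]

end
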